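/- Let T be a contraction on a Hilbert space such that some subsequence of powers T^{n_k} converges weakly to an injective operator. Then T is unitary. -/

import Mathlib

open Filter

local notation "⟪" x ", " y "⟫" => @inner ℂ _ _ x y

/-- If a contraction `T` on a Hilbert space has a subsequence of powers converging
weakly to an injective operator, then `T` is unitary. -/
theorem stmt_5 {H : Type*} [NormedAddCommGroup H] [InnerProductSpace ℂ H]
    [CompleteSpace H]
    (T V : H →L[ℂ] H) (hT : ‖T‖ ≤ 1)
    (n : ℕ → ℕ) (hn : StrictMono n)
    (hV : ∀ x y : H, Tendsto (fun k => ⟪(T ^ n k) x, y⟫) atTop (nhds ⟪V x, y⟫))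
    (hinj : Function.Injective V) :
    (∀ x, ‖T x‖ = ‖x‖) ∧ Function.Surjective T := by
  set S := ContinuousLinearMap.adjoint T with hSdef
  have hSnorm : ‖S‖ = ‖T‖ := by
    exact (ContinuousLinearMap.adjoint : (H →L[ℂ] H) ≃ₗᵢ⋆[ℂ] (H →L[ℂ] H)).norm_map T
  have hT1 : ∀ u : H, ‖T u‖ ≤ ‖u‖ := fun u =>
    (T.le_opNorm u).trans (mul_le_of_le_one_left (norm_nonneg u) hT)
  have hS1 : ∀ u : H, ‖S u‖ ≤ ‖u‖ := fun u =>
    (S.le_opNorm u).trans (mul_le_of_le_one_left (norm_nonneg u) (hSnorm.le.trans hT))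
  -- adjoint of powers
  have hpow : ∀ m : ℕ, ContinuousLinearMap.adjoint (T ^ m) = S ^ m := by
    intro m
    rw [← ContinuousLinearMap.star_eq_adjoint, star_pow, ContinuousLinearMap.star_eq_adjoint]
  have hpow_inner : ∀ (m : ℕ) (u w : H), ⟪(T ^ m) u, w⟫ = ⟪u, (S ^ m) w⟫ := by
    intro m u w
    rw [← hpow m, ContinuousLinearMap.adjoint_inner_right]
  -- key inequality
  have key : ∀ y : H, ‖y - T (S y)‖ ^ 2 ≤ ‖y‖ ^ 2 - ‖S y‖ ^ 2 := by
    intro y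
    have h1 : ⟪y, T (S y)⟫ = (‖S y‖ : ℂ) ^ 2 := by
      rw [← ContinuousLinearMap.adjoint_inner_left T (S y) y]
      exact inner_self_eq_norm_sq_to_K (𝕜 := ℂ) (S y)
    have h2 : ‖y - T (S y)‖ ^ 2 = ‖y‖ ^ 2 - 2 * Complex.re ⟪y, T (S y)⟫ + ‖T (S y)‖ ^ 2 :=
      norm_sub_sq (𝕜 := ℂ) y (T (S y))
    have h3 : Complex.re ⟪y, T (S y)⟫ = ‖S y‖ ^ 2 := by
      rw [h1, ← Complex.ofReal_pow, Complex.ofReal_re]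
    have h4 : ‖T (S y)‖ ≤ ‖S y‖ := hT1 _
    nlinarith [norm_nonneg (T (S y)), norm_nonneg (S y)]
  -- decay of the defect
  have decay : ∀ w : H, Tendsto (fun m => ‖(S ^ m) w - T (S ((S ^ m) w))‖) atTop (nhds 0) := by
    intro w
    set a : ℕ → ℝ := fun m => ‖(S ^ m) w‖ ^ 2 with ha
    have hsucc : ∀ m, (S ^ (m + 1)) w = S ((S ^ m) w) := by
      intro m; rw [pow_succ']; rfl
    have haAnt : Antitone a := antitone_nat_of_succ_le (fun m => by
      simpa only [ha, hsucc m] using pow_le_pow_left₀ (norm_nonneg _) (hS1 ((S ^ m) w)) 2)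
    have hbdd : BddBelow (Set.range a) := ⟨0, fun x ⟨m, hm⟩ => hm ▸ sq_nonneg _⟩
    have hconv := tendsto_atTop_ciInf haAnt hbdd
    have hdiff : Tendsto (fun m => a m - a (m + 1)) atTop (nhds 0) := by
      have := hconv.sub (hconv.comp (tendsto_add_atTop_nat 1))
      simpa using this
    have hsq : Tendsto (fun m => ‖(S ^ m) w - T (S ((S ^ m) w))‖ ^ 2) atTop (nhds 0) := by
      refine squeeze_zero (fun m => sq_nonneg _) (fun m => ?_) hdiff
      simpa only [ha, hsucc m] using key ((S ^ m) w)
    have := hsq.sqrt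
    simpa [Real.sqrt_sq (norm_nonneg _), Real.sqrt_zero] using this
  -- self-adjointness of the defect operator
  have hAsym : ∀ u v : H, ⟪u - T (S u), v⟫ = ⟪u, v - T (S v)⟫ := by
    intro u v
    have h1 : ⟪T (S u), v⟫ = ⟪S u, S v⟫ :=
      (ContinuousLinearMap.adjoint_inner_right T (S u) v).symm
    have h2 : ⟪u, T (S v)⟫ = ⟪S u, S v⟫ :=
      (ContinuousLinearMap.adjoint_inner_left T (S v) u).symm
    rw [inner_sub_left, inner_sub_right, h1, h2]
  -- the defect is killed by V
  have hTS : ∀ z : H, T (S z) = z := by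
    intro z
    have hV0 : V (z - T (S z)) = 0 := by
      have hall : ∀ w : H, ⟪V (z - T (S z)), w⟫ = 0 := by
        intro w
        refine tendsto_nhds_unique (hV _ w) ?_
        have heq : ∀ k : ℕ, ⟪(T ^ n k) (z - T (S z)), w⟫
            = ⟪z, (S ^ n k) w - T (S ((S ^ n k) w))⟫ := by
          intro k
          rw [hpow_inner, hAsym]
        rw [show (0 : ℂ) = ⟪z, (0 : H)⟫ by simp]
        refine Tendsto.congr (fun k => (heq k).symm) ?_
        have hd : Tendsto (fun k => (S ^ n k) w - T (S ((S ^ n k) w))) atTop (nhds 0) := by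
          rw [tendsto_zero_iff_norm_tendsto_zero]
          exact (decay w).comp hn.tendsto_atTop
        exact (Tendsto.inner tendsto_const_nhds hd)
      have := hall (V (z - T (S z)))
      rwa [inner_self_eq_zero] at this
    have : z - T (S z) = 0 := hinj (by rw [hV0, map_zero])
    exact (sub_eq_zero.mp this).symm
  -- T is injective
  have hker : ∀ x : H, T x = 0 → x = 0 := by
    intro x hx
    have hV0 : V x = 0 := by
      have hall : ⟪V x, V x⟫ = 0 := by
        refine tendsto_nhds_unique (hV x (V x)) ?_
        refine Tendsto.congr' ?_ (tendsto_const_nhds (x := (0 : ℂ)))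
        filter_upwards [eventually_ge_atTop 1] with k hk
        obtain ⟨m, hm⟩ := Nat.exists_eq_succ_of_ne_zero
          (Nat.one_le_iff_ne_zero.mp (hk.trans hn.le_apply))
        rw [hm, pow_succ]
        simp [hx]
      rwa [inner_self_eq_zero] at hall
    exact hinj (by rw [hV0, map_zero])
  have hTinj : Function.Injective T := by
    intro x y hxy
    have : T (x - y) = 0 := by rw [map_sub, hxy, sub_self]
    have := hker _ this
    exact sub_eq_zero.mp this
  have hST : ∀ x : H, S (T x) = x := fun x => hTinj (hTS (T x))
  constructor
  · intro x
    have h1 : ⟪T x, T x⟫ = ⟪x, x⟫ := by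
      have := ContinuousLinearMap.adjoint_inner_left T (x := x) (y := T x)
      rw [← hSdef, hST x] at this
      exact this.symm
    have h2 : ‖T x‖ ^ 2 = ‖x‖ ^ 2 := by
      have h2' := (inner_self_eq_norm_sq_to_K (𝕜 := ℂ) (T x)).symm.trans
        (h1.trans (inner_self_eq_norm_sq_to_K (𝕜 := ℂ) x))
      exact_mod_cast h2'
    have := congrArg Real.sqrt h2
    rwa [Real.sqrt_sq (norm_nonneg _), Real.sqrt_sq (norm_nonneg _)] at this
  · exact fun x => ⟨S x, hTS x⟩
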